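/- The bilinear form B on ℝⁿ × ℝ defined by B((v,τ),(v',τ')) = h(v,v') − (ω(v)−τ)(ω(v')−τ') is a nondegenerate symmetric bilinear form of index 1. Precisely: (i) B is symmetric; (ii) B is nondegenerate (if B(u,u') = 0 for all u' ∈ ℝⁿ × ℝ then u = 0); (iii) there exists a vector u ∈ ℝⁿ × ℝ with B(u,u) < 0; (iv) there exists an n-dimensional linear subspace of ℝⁿ × ℝ on which B is positive definite; and (v) every linear subspace of ℝⁿ × ℝ on which B is negative definite has dimension at most 1. -/

import Mathlib

/-- The bilinear form `B((v,τ),(v',τ')) = h(v,v') − (ω(v)−τ)(ω(v')−τ')` on `ℝⁿ × ℝ`,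
associated to a positive definite symmetric bilinear form `h` and a one-form `ω`
satisfying the Randers condition, is a nondegenerate symmetric bilinear form of index 1. -/
theorem stmt_0 (n : ℕ)
    (h : (Fin n → ℝ) →ₗ[ℝ] (Fin n → ℝ) →ₗ[ℝ] ℝ)
    (hsymm : ∀ v w : Fin n → ℝ, h v w = h w v)
    (hpos : ∀ v : Fin n → ℝ, v ≠ 0 → 0 < h v v)
    (ω : (Fin n → ℝ) →ₗ[ℝ] ℝ)
    (hrand : ∀ v : Fin n → ℝ, v ≠ 0 → (ω v) ^ 2 < h v v)
    (B : ((Fin n → ℝ) × ℝ) → ((Fin n → ℝ) × ℝ) → ℝ)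
    (hB : ∀ u u' : (Fin n → ℝ) × ℝ,
      B u u' = h u.1 u'.1 - (ω u.1 - u.2) * (ω u'.1 - u'.2)) :
    -- (i) B is symmetric
    (∀ u u' : (Fin n → ℝ) × ℝ, B u u' = B u' u) ∧
    -- (ii) B is nondegenerate
    (∀ u : (Fin n → ℝ) × ℝ, (∀ u' : (Fin n → ℝ) × ℝ, B u u' = 0) → u = 0) ∧
    -- (iii) there is a timelike vector
    (∃ u : (Fin n → ℝ) × ℝ, B u u < 0) ∧
    -- (iv) there is an n-dimensional subspace on which B is positive definite
    (∃ W : Submodule ℝ ((Fin n → ℝ) × ℝ), Module.finrank ℝ W = n ∧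
      ∀ u ∈ W, u ≠ 0 → 0 < B u u) ∧
    -- (v) every subspace on which B is negative definite has dimension at most 1
    (∀ W : Submodule ℝ ((Fin n → ℝ) × ℝ),
      (∀ u ∈ W, u ≠ 0 → B u u < 0) → Module.finrank ℝ W ≤ 1) := by
  refine ⟨?_, ?_, ?_, ?_, ?_⟩
  · intro u u'
    rw [hB, hB, hsymm]; ring
  · intro u hu
    -- first: ω u.1 = u.2
    have h1 : ω u.1 - u.2 = 0 := by
      have := hu (0, u.2 - ω u.1)
      rw [hB] at this
      simp at this
      nlinarith [this]
    have h2 : u.1 = 0 := by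
      by_contra hne
      have := hu (u.1, u.2)
      rw [hB] at this
      simp [h1] at this
      exact absurd this (ne_of_gt (hpos u.1 hne))
    have h3 : u.2 = 0 := by
      have := h1
      rw [h2] at this
      simpa using this
    exact Prod.ext h2 h3
  · refine ⟨(0, 1), ?_⟩
    rw [hB]
    simp
  · refine ⟨LinearMap.range ((LinearMap.id : (Fin n → ℝ) →ₗ[ℝ] (Fin n → ℝ)).prod ω), ?_, ?_⟩
    · rw [LinearMap.finrank_range_of_inj]
      · simp [Module.finrank_pi]
      · intro a b hab
        simpa using congrArg Prod.fst hab
    · rintro u ⟨v, rfl⟩ hne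
      have hv : v ≠ 0 := by
        intro hv0; apply hne; simp [hv0]
      rw [hB]
      simp
      exact hpos v hv
  · intro W hW
    by_contra hle
    push_neg at hle
    -- consider the linear functional L (v,τ) = ω v - τ restricted to W
    set L : ((Fin n → ℝ) × ℝ) →ₗ[ℝ] ℝ :=
      ω.comp (LinearMap.fst ℝ _ _) - LinearMap.snd ℝ _ _ with hL
    have hker : 0 < Module.finrank ℝ (LinearMap.ker (L.domRestrict W)) := by
      have hadd := LinearMap.finrank_range_add_finrank_ker (L.domRestrict W)
      have hrange : Module.finrank ℝ (LinearMap.range (L.domRestrict W)) ≤ 1 := by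
        have := Submodule.finrank_le (LinearMap.range (L.domRestrict W))
        simpa using this
      omega
    have hker := (Module.finrank_pos_iff (R := ℝ) (M := LinearMap.ker (L.domRestrict W))).mp hker
    obtain ⟨⟨x, hx0⟩, hxne⟩ := exists_ne (0 : LinearMap.ker (L.domRestrict W))
    have hxW : (x : (Fin n → ℝ) × ℝ) ∈ W := x.2
    have hxnz : (x : (Fin n → ℝ) × ℝ) ≠ 0 := by
      intro hz
      exact hxne (Subtype.ext (Subtype.ext hz))
    have hLx : ω (x : (Fin n → ℝ) × ℝ).1 - (x : (Fin n → ℝ) × ℝ).2 = 0 := by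
      have := hx0
      rw [LinearMap.mem_ker] at this
      simpa [hL, sub_eq_zero] using congrArg id this
    have hBx := hW _ hxW hxnz
    rw [hB, hLx] at hBx
    simp at hBx
    rcases eq_or_ne (x : (Fin n → ℝ) × ℝ).1 0 with h1 | h1
    · apply hxnz
      have h2 : (x : (Fin n → ℝ) × ℝ).2 = 0 := by
        rw [h1] at hLx; simpa using hLx
      exact Prod.ext h1 h2
    · exact absurd hBx (not_lt.2 (le_of_lt (hpos _ h1)))
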